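/- arXiv:1511.05836 — 4 statements merged into one kernel-verified Lean document; each statement's English description precedes it below -/
import Mathlib

section
/- Let X₀ be a perpetual point of f (F(X₀) = 0, f(X₀) ≠ 0), h(X) = A·X + b with A invertible, and G the acceleration field of g(Y) = A·f(A⁻¹(Y − b)). Then (DG)(h(X₀)) = A·(DF)(X₀)·A⁻¹, so the eigenvalues of the linearization of the acceleration field at the perpetual point are preserved under the affine transformation. -/
open Polynomial in
lemma charpoly_conj_aux {n : Type*} [Fintype n] [DecidableEq n] {R : Type*} [CommRing R]
    (A M : Matrix n n R) [Invertible A] : (A * M * A⁻¹).charpoly = M.charpoly := by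
  have hA : (A.map (C : R →+* R[X])) * (A⁻¹.map C) = 1 := by
    rw [← Matrix.map_mul, Matrix.mul_inv_of_invertible]; simp
  have hA' : (A⁻¹.map (C : R →+* R[X])) * (A.map C) = 1 := by
    rw [← Matrix.map_mul, Matrix.inv_mul_of_invertible]; simp
  have hchar : Matrix.charmatrix (A * M * A⁻¹)
      = A.map C * Matrix.charmatrix M * A⁻¹.map C := by
    unfold Matrix.charmatrix
    simp only [RingHom.mapMatrix_apply]
    rw [Matrix.mul_sub, Matrix.sub_mul]
    congr 1
    · rw [← (Matrix.scalar_commute (X : R[X]) (fun r => Commute.all _ _) (A.map C)).eq,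
        Matrix.mul_assoc, hA, Matrix.mul_one]
    · rw [Matrix.map_mul, Matrix.map_mul]
  unfold Matrix.charpoly
  rw [hchar, Matrix.det_mul, Matrix.det_mul, mul_comm, ← mul_assoc, ← Matrix.det_mul, hA']
  simp


/-- At a perpetual point X₀ of f, the Jacobian of the transformed
acceleration field G at h(X₀) equals A·(DF)(X₀)·A⁻¹, so the eigenvalues of the
linearization at the perpetual point are preserved (same characteristic polynomial). -/
theorem stmt_4 (n : ℕ) (f : (Fin n → ℝ) → (Fin n → ℝ)) (hf : ContDiff ℝ 2 f)
    (A : Matrix (Fin n) (Fin n) ℝ) [Invertible A] (b : Fin n → ℝ)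
    (h g F G : (Fin n → ℝ) → (Fin n → ℝ))
    (hh : ∀ X, h X = A.mulVec X + b)
    (hg : ∀ Y, g Y = A.mulVec (f (A⁻¹.mulVec (Y - b))))
    (hF : ∀ X, F X = fderiv ℝ f X (f X))
    (hG : ∀ Y, G Y = fderiv ℝ g Y (g Y))
    (X₀ : Fin n → ℝ) (hpp : F X₀ = 0) (hvel : f X₀ ≠ 0) :
    LinearMap.toMatrix' (fderiv ℝ G (h X₀) : (Fin n → ℝ) →ₗ[ℝ] (Fin n → ℝ))
      = A * LinearMap.toMatrix' (fderiv ℝ F X₀ : (Fin n → ℝ) →ₗ[ℝ] (Fin n → ℝ)) * A⁻¹ ∧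
    (LinearMap.toMatrix' (fderiv ℝ G (h X₀) : (Fin n → ℝ) →ₗ[ℝ] (Fin n → ℝ))).charpoly
      = (LinearMap.toMatrix' (fderiv ℝ F X₀ : (Fin n → ℝ) →ₗ[ℝ] (Fin n → ℝ))).charpoly := by
  -- continuous linear maps for A, A⁻¹
  set M : (Fin n → ℝ) →L[ℝ] (Fin n → ℝ) := LinearMap.toContinuousLinearMap (Matrix.toLin' A) with hM
  set N : (Fin n → ℝ) →L[ℝ] (Fin n → ℝ) := LinearMap.toContinuousLinearMap (Matrix.toLin' A⁻¹) with hN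
  have hMapp : ∀ v, M v = A.mulVec v := fun v => rfl
  have hNapp : ∀ v, N v = A⁻¹.mulVec v := fun v => rfl
  have hNM : ∀ v, N (M v) = v := by
    intro v
    rw [hMapp, hNapp, Matrix.mulVec_mulVec, Matrix.inv_mul_of_invertible, Matrix.one_mulVec]
  set φ : (Fin n → ℝ) → (Fin n → ℝ) := fun Y => A⁻¹.mulVec (Y - b) with hφ
  have hφdiff : ∀ Y, HasFDerivAt φ N Y := by
    intro Y
    have : φ = fun Y => N (Y - b) := rfl
    rw [this]
    simpa using (N.hasFDerivAt (x := Y - b)).comp Y ((hasFDerivAt_id Y).sub_const b)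
  have hfdiff : Differentiable ℝ f := hf.differentiable (by norm_num)
  have hgd : ∀ Y, HasFDerivAt g ((M.comp (fderiv ℝ f (φ Y))).comp N) Y := by
    intro Y
    have h1 : HasFDerivAt f (fderiv ℝ f (φ Y)) (φ Y) := (hfdiff (φ Y)).hasFDerivAt
    have h2 : HasFDerivAt (fun Y => M (f (φ Y))) ((M.comp (fderiv ℝ f (φ Y))).comp N) Y :=
      (M.hasFDerivAt.comp _ (h1.comp Y (hφdiff Y)))
    have : g = fun Y => M (f (φ Y)) := by funext Y; rw [hg]; rfl
    rw [this]
    exact h2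
  -- G Y = M (F (φ Y))
  have hGeq : G = fun Y => M (F (φ Y)) := by
    funext Y
    rw [hG, (hgd Y).fderiv]
    simp only [ContinuousLinearMap.comp_apply]
    rw [hg Y]
    show (M ((fderiv ℝ f (φ Y)) (N (M (f (φ Y)))))) = M (F (φ Y))
    rw [hNM, hF]
  -- F is differentiable
  have hf' : ContDiff ℝ 1 (fderiv ℝ f) := hf.fderiv_right (by norm_num)
  have hFdiff : Differentiable ℝ F := by
    have : F = fun X => fderiv ℝ f X (f X) := funext hF
    rw [this]
    exact fun X => ((hf'.differentiable one_ne_zero) X).clm_apply (hfdiff X)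
  have hφh : φ (h X₀) = X₀ := by
    rw [hh, hφ]
    show A⁻¹.mulVec (A.mulVec X₀ + b - b) = X₀
    rw [add_sub_cancel_right, Matrix.mulVec_mulVec, Matrix.inv_mul_of_invertible,
      Matrix.one_mulVec]
  have hGd : HasFDerivAt G ((M.comp (fderiv ℝ F X₀)).comp N) (h X₀) := by
    rw [hGeq]
    have h1 : HasFDerivAt F (fderiv ℝ F X₀) (φ (h X₀)) := by
      rw [hφh]; exact (hFdiff X₀).hasFDerivAt
    exact M.hasFDerivAt.comp _ (h1.comp _ (hφdiff (h X₀)))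
  have hmain : LinearMap.toMatrix' (fderiv ℝ G (h X₀) : (Fin n → ℝ) →ₗ[ℝ] (Fin n → ℝ))
      = A * LinearMap.toMatrix' (fderiv ℝ F X₀ : (Fin n → ℝ) →ₗ[ℝ] (Fin n → ℝ)) * A⁻¹ := by
    rw [hGd.fderiv]
    rw [show (((M.comp (fderiv ℝ F X₀)).comp N : (Fin n → ℝ) →L[ℝ] (Fin n → ℝ)) :
        (Fin n → ℝ) →ₗ[ℝ] (Fin n → ℝ))
      = ((M : (Fin n → ℝ) →ₗ[ℝ] (Fin n → ℝ)).comp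
          (fderiv ℝ F X₀ : (Fin n → ℝ) →ₗ[ℝ] (Fin n → ℝ))).comp
          (N : (Fin n → ℝ) →ₗ[ℝ] (Fin n → ℝ)) from rfl]
    rw [LinearMap.toMatrix'_comp, LinearMap.toMatrix'_comp]
    rw [hM, hN, LinearMap.coe_toContinuousLinearMap, LinearMap.coe_toContinuousLinearMap,
      LinearMap.toMatrix'_toLin', LinearMap.toMatrix'_toLin']
  exact ⟨hmain, by rw [hmain]; exact charpoly_conj_aux A _⟩
end

section
/- If h: ℝⁿ → ℝⁿ is C² with g ∘ h = Dh · f, and at a point X₀ the second derivative satisfies (D²h)(X₀)[f(X₀), f(X₀)] = 0 and F(X₀) = 0, then G(h(X₀)) = 0; i.e., perpetual points of f at which the quadratic correction term vanishes map to zeros of the transformed acceleration field. -/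
/-- If h is C² with g∘h = Dh·f, and at X₀ the quadratic correction
(D²h)(X₀)[f X₀, f X₀] vanishes and F(X₀) = 0, then G(h X₀) = 0. -/
theorem stmt_6 (n : ℕ) (f g h F G : (Fin n → ℝ) → (Fin n → ℝ))
    (hf : ContDiff ℝ 1 f) (hgc : ContDiff ℝ 1 g) (hh : ContDiff ℝ 2 h)
    (hconj : ∀ X, g (h X) = fderiv ℝ h X (f X))
    (hF : ∀ X, F X = fderiv ℝ f X (f X))
    (hG : ∀ Y, G Y = fderiv ℝ g Y (g Y))
    (X₀ : Fin n → ℝ)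
    (hsec : fderiv ℝ (fun x => fderiv ℝ h x) X₀ (f X₀) (f X₀) = 0)
    (hpp : F X₀ = 0) :
    G (h X₀) = 0 := by
  have hf1 : HasFDerivAt f (fderiv ℝ f X₀) X₀ :=
    ((hf.differentiable one_ne_zero) X₀).hasFDerivAt
  have hh1 : HasFDerivAt h (fderiv ℝ h X₀) X₀ :=
    ((hh.differentiable two_ne_zero) X₀).hasFDerivAt
  have hg1 : HasFDerivAt g (fderiv ℝ g (h X₀)) (h X₀) :=
    ((hgc.differentiable one_ne_zero) (h X₀)).hasFDerivAt
  have hDh : HasFDerivAt (fun x => fderiv ℝ h x)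
      (fderiv ℝ (fun x => fderiv ℝ h x) X₀) X₀ := by
    have hc : ContDiff ℝ 1 (fun x => fderiv ℝ h x) :=
      hh.fderiv_right (by norm_num)
    exact ((hc.differentiable one_ne_zero) X₀).hasFDerivAt
  have happ := hDh.clm_apply hf1
  have hcomp : HasFDerivAt (fun x => g (h x))
      ((fderiv ℝ g (h X₀)).comp (fderiv ℝ h X₀)) X₀ := hg1.comp X₀ hh1
  rw [show (fun x => (fderiv ℝ h x) (f x)) = fun x => g (h x) from
    funext fun x => (hconj x).symm] at happ
  have hEq := hcomp.unique happ
  have := congrArg (fun L : (Fin n → ℝ) →L[ℝ] (Fin n → ℝ) => L (f X₀)) hEq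
  simp only [ContinuousLinearMap.comp_apply, ContinuousLinearMap.add_apply,
    ContinuousLinearMap.flip_apply] at this
  rw [← hconj, ← hF, hpp] at this
  simp only [hsec, map_zero, add_zero] at this
  rw [hG, this]
end

section
/- Let g(y) = ((y−β)² − α²A²)/α with α ≠ 0, and G(y) = g'(y)·g(y) = (2/α²)(y−β)((y−β)² − α²A²) its acceleration field. Then y = β is the unique perpetual point of g (G(β) = 0, g(β) = −αA² ≠ 0 when A ≠ 0), and G'(β) = −2A², equal to the eigenvalue of the original system at its perpetual point x = 0. -/
/-- For g(y) = ((y−β)² − α²A²)/α (α ≠ 0, A ≠ 0) with acceleration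
G(y) = g'(y)·g(y), y = β is the unique perpetual point of g (G(β) = 0 and
g(β) = −αA² ≠ 0) and G'(β) = −2A², matching the original eigenvalue at x = 0. -/
theorem stmt_12 (A α β : ℝ) (hA : A ≠ 0) (hα : α ≠ 0) (g G : ℝ → ℝ)
    (hg : ∀ y, g y = ((y - β) ^ 2 - α ^ 2 * A ^ 2) / α)
    (hG : ∀ y, G y = deriv g y * g y) :
    (∀ y, G y = (2 / α ^ 2) * (y - β) * ((y - β) ^ 2 - α ^ 2 * A ^ 2)) ∧
    G β = 0 ∧ g β = -α * A ^ 2 ∧ g β ≠ 0 ∧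
    (∀ y, G y = 0 → g y ≠ 0 → y = β) ∧
    deriv G β = -2 * A ^ 2 := by
  have hgfun : g = fun y => ((y - β) ^ 2 - α ^ 2 * A ^ 2) / α := funext hg
  have hdg : ∀ y, deriv g y = 2 * (y - β) / α := by
    intro y
    rw [hgfun]
    have : HasDerivAt (fun y : ℝ => ((y - β) ^ 2 - α ^ 2 * A ^ 2) / α)
        (2 * (y - β) / α) y := by
      have h1 : HasDerivAt (fun y : ℝ => (y - β) ^ 2 - α ^ 2 * A ^ 2)
          (2 * (y - β)) y := by
        have := ((hasDerivAt_id y).sub_const β).pow 2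
        simpa using this.sub_const (α ^ 2 * A ^ 2)
      simpa using h1.div_const α
    exact this.deriv
  have hGfun : ∀ y, G y = (2 / α ^ 2) * (y - β) * ((y - β) ^ 2 - α ^ 2 * A ^ 2) := by
    intro y
    rw [hG, hdg, hg]
    field_simp
  have hgβ : g β = -α * A ^ 2 := by
    rw [hg]; field_simp; ring
  refine ⟨hGfun, ?_, hgβ, ?_, ?_, ?_⟩
  · rw [hGfun]; ring
  · rw [hgβ]
    simpa using mul_ne_zero hα (pow_ne_zero 2 hA)
  · intro y hGy hgy
    rw [hGfun] at hGy
    rw [hg] at hgy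
    have h2 : ((y - β) ^ 2 - α ^ 2 * A ^ 2) ≠ 0 := by
      intro h; exact hgy (by rw [h]; simp)
    have hα2 : (2 / α ^ 2 : ℝ) ≠ 0 := by positivity
    have := mul_eq_zero.mp hGy
    rcases this with h | h
    · rcases mul_eq_zero.mp h with h' | h'
      · exact absurd h' hα2
      · linarith [sub_eq_zero.mp h']
    · exact absurd h h2
  · have hGf : G = fun y => (2 / α ^ 2) * (y - β) * ((y - β) ^ 2 - α ^ 2 * A ^ 2) :=
      funext hGfun
    rw [hGf]
    have h1 : HasDerivAt (fun y : ℝ => (2 / α ^ 2) * (y - β) * ((y - β) ^ 2 - α ^ 2 * A ^ 2))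
        ((2 / α ^ 2) * ((β - β) ^ 2 - α ^ 2 * A ^ 2) + (2 / α ^ 2) * (β - β) * (2 * (β - β))) β := by
      have ha : HasDerivAt (fun y : ℝ => (2 / α ^ 2) * (y - β)) (2 / α ^ 2) β := by
        simpa using ((hasDerivAt_id β).sub_const β).const_mul (2 / α ^ 2)
      have hb : HasDerivAt (fun y : ℝ => (y - β) ^ 2 - α ^ 2 * A ^ 2) (2 * (β - β)) β := by
        have := ((hasDerivAt_id β).sub_const β).pow 2
        simpa using this.sub_const (α ^ 2 * A ^ 2)
      exact ha.mul hb
    rw [h1.deriv]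
    field_simp
    ring
end

section
/- For g(y) = 2√y(y − A²) on y > 0 with A > 0, the acceleration field G(y) = g'(y)·g(y) = 2(3y − A²)(y − A²) has a perpetual point at y = A²/3 with G'(A²/3) = −4A² and g(A²/3) ≠ 0; note A²/3 is not the image under h(x) = x² of the perpetual point x = 0 of the original system f(x) = x² − A². -/
/-- For g(y) = 2√y(y − A²) on y > 0 (A > 0), the acceleration
field G(y) = g'(y)·g(y) equals 2(3y − A²)(y − A²) on y > 0, has a perpetual
point at y = A²/3 with G'(A²/3) = −4A² and g(A²/3) ≠ 0; and A²/3 is not the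
image under h(x) = x² of the original perpetual point x = 0. -/
theorem stmt_14 (A : ℝ) (hA : 0 < A) (g G : ℝ → ℝ)
    (hg : ∀ y, g y = 2 * Real.sqrt y * (y - A ^ 2))
    (hG : ∀ y, G y = deriv g y * g y) :
    (∀ y, 0 < y → G y = 2 * (3 * y - A ^ 2) * (y - A ^ 2)) ∧
    G (A ^ 2 / 3) = 0 ∧ g (A ^ 2 / 3) ≠ 0 ∧
    deriv G (A ^ 2 / 3) = -4 * A ^ 2 ∧
    A ^ 2 / 3 ≠ (0 : ℝ) ^ 2 := by
  have hgd : ∀ y : ℝ, 0 < y →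
      HasDerivAt g (2 * (1 / (2 * Real.sqrt y)) * (y - A ^ 2) +
        2 * Real.sqrt y * 1) y := by
    intro y hy
    have h1 : HasDerivAt (fun y : ℝ => 2 * Real.sqrt y) (2 * (1 / (2 * Real.sqrt y))) y :=
      (Real.hasDerivAt_sqrt hy.ne').const_mul 2
    have h2 : HasDerivAt (fun y : ℝ => y - A ^ 2) 1 y := (hasDerivAt_id y).sub_const _
    have hgfun : g = fun y => 2 * Real.sqrt y * (y - A ^ 2) := funext hg
    rw [hgfun]
    exact h1.mul h2
  have hGform : ∀ y, 0 < y → G y = 2 * (3 * y - A ^ 2) * (y - A ^ 2) := by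
    intro y hy
    have hs : Real.sqrt y > 0 := Real.sqrt_pos.mpr hy
    have hd := (hgd y hy).deriv
    rw [hG, hd, hg]
    have hss : Real.sqrt y * Real.sqrt y = y := Real.mul_self_sqrt hy.le
    field_simp
    linear_combination (2 * (y - A ^ 2)) * hss
  refine ⟨hGform, ?_, ?_, ?_, ?_⟩
  · have h3 : (0:ℝ) < A ^ 2 / 3 := by positivity
    rw [hGform _ h3]; ring
  · rw [hg]
    have h3 : (0:ℝ) < A ^ 2 / 3 := by positivity
    have hs : Real.sqrt (A ^ 2 / 3) > 0 := Real.sqrt_pos.mpr h3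
    have : A ^ 2 / 3 - A ^ 2 < 0 := by nlinarith
    nlinarith
  · have h3 : (0:ℝ) < A ^ 2 / 3 := by positivity
    have heq : G =ᶠ[nhds (A ^ 2 / 3)] fun y => 2 * (3 * y - A ^ 2) * (y - A ^ 2) := by
      filter_upwards [eventually_gt_nhds h3] with y hy using hGform y hy
    rw [heq.deriv_eq]
    have hP : HasDerivAt (fun y : ℝ => 2 * (3 * y - A ^ 2) * (y - A ^ 2))
        (12 * (A ^ 2 / 3) - 8 * A ^ 2) (A ^ 2 / 3) := by
      have : HasDerivAt (fun y : ℝ => 2 * (3 * y - A ^ 2) * (y - A ^ 2))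
          ((2 * 3) * (A ^ 2 / 3 - A ^ 2) + (2 * (3 * (A ^ 2 / 3) - A ^ 2)) * 1)
          (A ^ 2 / 3) := by
        have h1 : HasDerivAt (fun y : ℝ => 2 * (3 * y - A ^ 2)) (2 * 3) (A ^ 2 / 3) := by
          simpa using (((hasDerivAt_id (A ^ 2 / 3)).const_mul 3).sub_const (A ^ 2)).const_mul 2
        exact h1.mul ((hasDerivAt_id _).sub_const _)
      convert this using 1; ring
    rw [hP.deriv]; ring
  · intro h
    simp at h
    nlinarith
end
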